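/- arXiv:1803.04464 — 2 statements merged into one kernel-verified Lean document; each statement's English description precedes it below -/
import Mathlib

section
/- For all t > 0 and all ε, δ > 0 with ε < min(1, 1/t) and δ < min(1, 1/t²), it holds that G((1−δ)t − ε)/G(t) ≤ 1 + 8(ε + εt + δ + δt²), where G(t) = 2(1 − Φ(t)). -/
noncomputable section

open MeasureTheory Real

/-- Standard normal density. -/
def gaussDensity (t : ℝ) : ℝ := Real.exp (-(t ^ 2) / 2) / Real.sqrt (2 * Real.pi)

/-- Standard normal CDF. -/
def Phi (t : ℝ) : ℝ := ∫ x in Set.Iic t, gaussDensity x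

/-- Two-sided Gaussian tail function `G(t) = 2(1 − Φ(t))`. -/
def Gtail (t : ℝ) : ℝ := 2 * (1 - Phi t)

lemma sqrt2pi_pos : 0 < Real.sqrt (2 * Real.pi) :=
  Real.sqrt_pos.2 (by positivity)

lemma gd_pos (x : ℝ) : 0 < gaussDensity x :=
  div_pos (Real.exp_pos _) sqrt2pi_pos

lemma gd_eq (x : ℝ) : gaussDensity x = Real.exp (-(1/2) * x ^ 2) / Real.sqrt (2 * Real.pi) := by
  unfold gaussDensity; ring_nf

lemma gd_integrable : Integrable gaussDensity := by
  have h := (integrable_exp_neg_mul_sq (b := 1/2) (by norm_num)).div_const (Real.sqrt (2 * Real.pi))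
  refine h.congr (Filter.Eventually.of_forall fun x => ?_)
  rw [gd_eq]

lemma gd_total : ∫ x, gaussDensity x = 1 := by
  have : ∫ x, gaussDensity x = (∫ x : ℝ, Real.exp (-(1/2) * x ^ 2)) / Real.sqrt (2 * Real.pi) := by
    simp_rw [gd_eq]
    exact integral_div _ _
  rw [this, integral_gaussian]
  rw [div_eq_one_iff_eq (ne_of_gt sqrt2pi_pos)]
  rw [Real.sqrt_mul (by norm_num : (0:ℝ) ≤ 2)]
  rw [show Real.pi / (1/2) = 2 * Real.pi by ring, Real.sqrt_mul (by norm_num : (0:ℝ) ≤ 2)]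

lemma one_sub_Phi (t : ℝ) : 1 - Phi t = ∫ x in Set.Ioi t, gaussDensity x := by
  have := intervalIntegral.integral_Iic_add_Ioi (b := t) gd_integrable.integrableOn gd_integrable.integrableOn
  rw [gd_total] at this
  unfold Phi
  linarith

lemma Phi_diff (s t : ℝ) : Phi t - Phi s = ∫ x in s..t, gaussDensity x := by
  exact intervalIntegral.integral_Iic_sub_Iic gd_integrable.integrableOn gd_integrable.integrableOn

lemma gd_le_gd {x y : ℝ} (h : x ^ 2 ≤ y ^ 2) : gaussDensity y ≤ gaussDensity x := by
  unfold gaussDensity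
  exact (div_le_div_iff_of_pos_right sqrt2pi_pos).2 (Real.exp_le_exp.2 (by linarith))

lemma gd_hasDerivAt (x : ℝ) : HasDerivAt gaussDensity (-x * gaussDensity x) x := by
  have h1 : HasDerivAt (fun x : ℝ => -(x ^ 2) / 2) (-x) x := by
    have := ((hasDerivAt_pow 2 x).neg).div_const 2
    simpa using this.congr_deriv (by ring)
  have h2 := (h1.exp).div_const (Real.sqrt (2 * Real.pi))
  refine h2.congr_deriv ?_
  unfold gaussDensity
  ring

lemma gd_tendsto : Filter.Tendsto gaussDensity Filter.atTop (nhds 0) := by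
  have h1 : Filter.Tendsto (fun x : ℝ => -(x ^ 2) / 2) Filter.atTop Filter.atBot := by
    apply Filter.Tendsto.atBot_div_const (by norm_num)
    exact Filter.tendsto_neg_atBot_iff.2 (Filter.tendsto_pow_atTop (by norm_num))
  have h2 := (Real.tendsto_exp_atBot.comp h1).div_const (Real.sqrt (2 * Real.pi))
  rw [zero_div] at h2
  exact h2.congr fun x => by simp [gaussDensity, Function.comp]

/-- Mills-type lower bound: `∫_{Ioi t} φ ≥ φ(t) t/(1+t²)`. -/
lemma tail_ge_mills (t : ℝ) :
    gaussDensity t * (t / (1 + t ^ 2)) ≤ ∫ x in Set.Ioi t, gaussDensity x := by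
  set h : ℝ → ℝ := fun x => gaussDensity x * (x / (1 + x ^ 2)) with hh
  have hderiv : ∀ x : ℝ, HasDerivAt h
      (gaussDensity x * ((1 - 2 * x ^ 2 - x ^ 4) / (1 + x ^ 2) ^ 2)) x := by
    intro x
    have hden : (1 + x ^ 2) ≠ 0 := by positivity
    have h1 : HasDerivAt (fun x : ℝ => x / (1 + x ^ 2))
        ((1 - x ^ 2) / (1 + x ^ 2) ^ 2) x := by
      have := (hasDerivAt_id x).div ((hasDerivAt_const x 1).add (hasDerivAt_pow 2 x)) hden
      refine this.congr_deriv ?_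
      simp only [Pi.add_apply, id]
      field_simp
      ring
    have := (gd_hasDerivAt x).mul h1
    refine this.congr_deriv ?_
    field_simp
    ring
  -- pointwise: -h' ≤ gd
  have hpt : ∀ x : ℝ, -(gaussDensity x * ((1 - 2 * x ^ 2 - x ^ 4) / (1 + x ^ 2) ^ 2))
      ≤ gaussDensity x := by
    intro x
    have hgd := (gd_pos x).le
    have hden : (0:ℝ) < (1 + x ^ 2) ^ 2 := by positivity
    have hdiv : (-1 : ℝ) ≤ (1 - 2 * x ^ 2 - x ^ 4) / (1 + x ^ 2) ^ 2 := by
      rw [le_div_iff₀ hden]; nlinarith [sq_nonneg (x^2)]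
    nlinarith [mul_nonneg hgd (by linarith : (0:ℝ) ≤ (1 - 2 * x ^ 2 - x ^ 4) / (1 + x ^ 2) ^ 2 + 1)]
  -- h T → 0
  have htend : Filter.Tendsto h Filter.atTop (nhds 0) := by
    apply squeeze_zero_norm (fun x => ?_) gd_tendsto
    have hgd := (gd_pos x).le
    rw [hh]
    simp only [norm_mul, Real.norm_eq_abs, abs_of_nonneg hgd]
    have : |x / (1 + x ^ 2)| ≤ 1 := by
      rw [abs_div, div_le_one (by positivity)]
      have : (0:ℝ) ≤ (|x| - 1)^2 := sq_nonneg _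
      rw [abs_of_nonneg (by positivity : (0:ℝ) ≤ 1 + x ^ 2)]
      nlinarith [sq_abs x]
    nlinarith [gd_pos x, abs_nonneg (x / (1 + x ^ 2))]
  -- for every T ≥ t : h t - h T ≤ ∫_{Ioi t} gd
  have key : ∀ T, t ≤ T → h t - h T ≤ ∫ x in Set.Ioi t, gaussDensity x := by
    intro T hT
    have hcont : Continuous fun x : ℝ =>
        gaussDensity x * ((1 - 2 * x ^ 2 - x ^ 4) / (1 + x ^ 2) ^ 2) := by
      have hgc : Continuous gaussDensity := by
        unfold gaussDensity
        continuity
      apply hgc.mul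
      apply Continuous.div
      · fun_prop
      · fun_prop
      · intro x; positivity
    have hftc : ∫ x in t..T, gaussDensity x * ((1 - 2 * x ^ 2 - x ^ 4) / (1 + x ^ 2) ^ 2)
        = h T - h t :=
      intervalIntegral.integral_eq_sub_of_hasDerivAt (fun x _ => hderiv x)
        (hcont.intervalIntegrable t T)
    have hmono : ∫ x in t..T, -(gaussDensity x * ((1 - 2 * x ^ 2 - x ^ 4) / (1 + x ^ 2) ^ 2))
        ≤ ∫ x in t..T, gaussDensity x := by
      apply intervalIntegral.integral_mono_on hT
        ((hcont.neg).intervalIntegrable t T) (gd_integrable.intervalIntegrable)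
      exact fun x _ => hpt x
    rw [intervalIntegral.integral_neg, hftc] at hmono
    have hIoi : ∫ x in t..T, gaussDensity x ≤ ∫ x in Set.Ioi t, gaussDensity x := by
      rw [intervalIntegral.integral_of_le hT]
      apply setIntegral_mono_set gd_integrable.integrableOn
        (Filter.Eventually.of_forall fun x => (gd_pos x).le)
      exact Filter.Eventually.of_forall fun x hx => hx.1
    linarith
  -- pass to the limit
  have hlim : Filter.Tendsto (fun T => h t - h T) Filter.atTop (nhds (h t)) := by
    simpa using (htend.const_sub (h t))
  have := le_of_tendsto hlim (Filter.eventually_atTop.2 ⟨t, key⟩)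
  exact this

lemma gd_le_max (x : ℝ) : gaussDensity x ≤ 1 / Real.sqrt (2 * Real.pi) := by
  have h := gd_le_gd (x := 0) (y := x) (by simpa using sq_nonneg x)
  have h0 : gaussDensity 0 = 1 / Real.sqrt (2 * Real.pi) := by
    unfold gaussDensity; norm_num
  rw [h0] at h; exact h

lemma num_le {s t : ℝ} (ht : 0 < t) (hst : s ≤ t) :
    (∫ x in s..t, gaussDensity x) ≤ gaussDensity t * ((Real.exp (t * (t - s)) - 1) / t) := by
  have hpt : ∀ x : ℝ, gaussDensity x ≤ gaussDensity t * Real.exp (t ^ 2 - t * x) := by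
    intro x
    unfold gaussDensity
    rw [div_mul_eq_mul_div, ← Real.exp_add]
    apply (div_le_div_iff_of_pos_right sqrt2pi_pos).2
    apply Real.exp_le_exp.2
    nlinarith [sq_nonneg (t - x)]
  have hanti : ∀ x : ℝ, HasDerivAt (fun y : ℝ => -Real.exp (t ^ 2 - t * y) / t)
      (Real.exp (t ^ 2 - t * x)) x := by
    intro x
    have h1 : HasDerivAt (fun y : ℝ => t ^ 2 - t * y) (-t) x := by
      exact ((hasDerivAt_const x (t ^ 2)).sub ((hasDerivAt_id x).const_mul t)).congr_deriv (by ring)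
    have := (h1.exp.neg).div_const t
    refine this.congr_deriv ?_
    field_simp
  have hftc : ∫ x in s..t, Real.exp (t ^ 2 - t * x)
      = -Real.exp (t ^ 2 - t * t) / t - (-Real.exp (t ^ 2 - t * s) / t) := by
    exact intervalIntegral.integral_eq_sub_of_hasDerivAt (fun x _ => hanti x)
      ((by fun_prop : Continuous fun x : ℝ => Real.exp (t ^ 2 - t * x)).intervalIntegrable s t)
  have hmono : (∫ x in s..t, gaussDensity x)
      ≤ ∫ x in s..t, gaussDensity t * Real.exp (t ^ 2 - t * x) := by
    apply intervalIntegral.integral_mono_on hst gd_integrable.intervalIntegrable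
    · exact ((by fun_prop : Continuous fun x : ℝ =>
        gaussDensity t * Real.exp (t ^ 2 - t * x)).intervalIntegrable s t)
    · exact fun x _ => hpt x
  have hconst : ∫ x in s..t, gaussDensity t * Real.exp (t ^ 2 - t * x)
      = gaussDensity t * ∫ x in s..t, Real.exp (t ^ 2 - t * x) :=
    intervalIntegral.integral_const_mul _ _
  rw [hconst, hftc] at hmono
  have heq : -Real.exp (t ^ 2 - t * t) / t - (-Real.exp (t ^ 2 - t * s) / t)
      = (Real.exp (t * (t - s)) - 1) / t := by
    have : t ^ 2 - t * t = 0 := by ring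
    rw [this, Real.exp_zero]
    rw [show t ^ 2 - t * s = t * (t - s) by ring]
    ring
  rw [heq] at hmono
  exact hmono

lemma exp_two_lt_eight : Real.exp 2 < 8 := by
  have h1 := Real.exp_one_lt_d9
  have h2 : Real.exp 2 = Real.exp 1 * Real.exp 1 := by
    rw [← Real.exp_add]; norm_num
  nlinarith [Real.exp_pos 1]

set_option maxHeartbeats 2000000 in
/-- for all `t > 0`, `0 < ε < min(1, 1/t)` and `0 < δ < min(1, 1/t²)`,
`G((1−δ)t − ε)/G(t) ≤ 1 + 8(ε + εt + δ + δt²)`. -/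
theorem gaussian_tail_ratio_bound (t ε δ : ℝ) (ht : 0 < t)
    (hε0 : 0 < ε) (hε : ε < min 1 (1 / t))
    (hδ0 : 0 < δ) (hδ : δ < min 1 (1 / t ^ 2)) :
    Gtail ((1 - δ) * t - ε) / Gtail t ≤ 1 + 8 * (ε + ε * t + δ + δ * t ^ 2) := by
  have hε1 : ε < 1 := lt_of_lt_of_le hε (min_le_left _ _)
  have hεt : ε * t < 1 := by
    have := lt_of_lt_of_le hε (min_le_right _ _)
    rw [lt_div_iff₀ ht] at this; linarith
  have hδ1 : δ < 1 := lt_of_lt_of_le hδ (min_le_left _ _)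
  have hδt : δ * t ^ 2 < 1 := by
    have := lt_of_lt_of_le hδ (min_le_right _ _)
    rw [lt_div_iff₀ (by positivity : (0:ℝ) < t ^ 2)] at this; linarith
  set s := (1 - δ) * t - ε with hs
  set R := ε + ε * t + δ + δ * t ^ 2 with hR
  have hRpos : 0 < R := by positivity
  have hst : s ≤ t := by rw [hs]; nlinarith
  have ha : t - s = δ * t + ε := by rw [hs]; ring
  have hapos : 0 < t - s := by rw [ha]; positivity
  -- denominator positivity
  have hmills := tail_ge_mills t
  have hDt : 1 - Phi t = ∫ x in Set.Ioi t, gaussDensity x := one_sub_Phi t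
  have hDpos : 0 < 1 - Phi t := by
    rw [hDt]
    calc (0:ℝ) < gaussDensity t * (t / (1 + t ^ 2)) := by
          have := gd_pos t; positivity
      _ ≤ _ := hmills
  have hGpos : 0 < Gtail t := by unfold Gtail; linarith
  have hP : Phi t - Phi s = ∫ x in s..t, gaussDensity x := Phi_diff s t
  -- the key inequality
  have key : Phi t - Phi s ≤ 8 * R * (1 - Phi t) := by
    rcases le_or_gt t 1 with hcase | hcase
    · -- small t
      have hnum : Phi t - Phi s ≤ (t - s) * (1 / Real.sqrt (2 * Real.pi)) := by
        rw [hP]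
        calc (∫ x in s..t, gaussDensity x)
            ≤ ∫ _x in s..t, 1 / Real.sqrt (2 * Real.pi) := by
              apply intervalIntegral.integral_mono_on hst gd_integrable.intervalIntegrable
                (intervalIntegrable_const)
              exact fun x _ => gd_le_max x
          _ = (t - s) * (1 / Real.sqrt (2 * Real.pi)) := by
              rw [intervalIntegral.integral_const]; simp [smul_eq_mul]
      have hden : Real.exp (-2) / Real.sqrt (2 * Real.pi) ≤ 1 - Phi t := by
        have h1 : gaussDensity (t + 1) ≤ ∫ x in t..(t+1), gaussDensity x := by
          calc gaussDensity (t + 1)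
              = ∫ _x in t..(t+1), gaussDensity (t + 1) := by
                rw [intervalIntegral.integral_const]; simp [smul_eq_mul]
            _ ≤ ∫ x in t..(t+1), gaussDensity x := by
                apply intervalIntegral.integral_mono_on (by linarith)
                  intervalIntegrable_const gd_integrable.intervalIntegrable
                intro x hx
                exact gd_le_gd (by nlinarith [hx.1, hx.2])
        have h2 : (∫ x in t..(t+1), gaussDensity x) ≤ ∫ x in Set.Ioi t, gaussDensity x := by
          rw [intervalIntegral.integral_of_le (by linarith)]
          apply setIntegral_mono_set gd_integrable.integrableOn
            (Filter.Eventually.of_forall fun x => (gd_pos x).le)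
          exact Filter.Eventually.of_forall fun x hx => hx.1
        have h3 : Real.exp (-2) / Real.sqrt (2 * Real.pi) ≤ gaussDensity (t + 1) := by
          unfold gaussDensity
          exact (div_le_div_iff_of_pos_right sqrt2pi_pos).2 (Real.exp_le_exp.2 (by nlinarith))
        rw [hDt]; linarith
      -- numeric: (t-s) * exp 2 ≤ 8 R
      have hnumeric : (t - s) * Real.exp 2 ≤ 8 * R := by
        rw [ha]
        have h8 := exp_two_lt_eight
        have hE := Real.exp_pos 2
        nlinarith [mul_pos hδ0 ht, mul_pos hε0 ht]
      have hprod : Real.exp (-2) * Real.exp 2 = 1 := by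
        rw [← Real.exp_add]; norm_num
      have hfinal : (t - s) ≤ 8 * R * Real.exp (-2) := by
        nlinarith [mul_le_mul_of_nonneg_right hnumeric (Real.exp_pos (-2)).le]
      calc Phi t - Phi s ≤ (t - s) * (1 / Real.sqrt (2 * Real.pi)) := hnum
        _ ≤ (8 * R * Real.exp (-2)) * (1 / Real.sqrt (2 * Real.pi)) := by
            apply mul_le_mul_of_nonneg_right hfinal; positivity
        _ = 8 * R * (Real.exp (-2) / Real.sqrt (2 * Real.pi)) := by ring
        _ ≤ 8 * R * (1 - Phi t) := by
            apply mul_le_mul_of_nonneg_left hden; positivity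
    · -- large t
      set E := Real.exp (t * (t - s)) with hE
      have hta : t * (t - s) ≤ 2 := by rw [ha]; nlinarith
      have htapos : 0 < t * (t - s) := mul_pos ht hapos
      have hEle : E ≤ Real.exp 2 := Real.exp_le_exp.2 hta
      have hEpos : 0 < E := Real.exp_pos _
      have hE1 : E - 1 ≤ t * (t - s) * E := by
        have h := Real.add_one_le_exp (-(t * (t - s)))
        rw [Real.exp_neg, ← hE] at h
        have := mul_le_mul_of_nonneg_right h hEpos.le
        rw [inv_mul_cancel₀ (ne_of_gt hEpos)] at this
        nlinarith
      have hnum : Phi t - Phi s ≤ gaussDensity t * ((E - 1) / t) := by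
        rw [hP]; exact num_le ht hst
      have hkey2 : (E - 1) * (1 + t ^ 2) ≤ 8 * R * t ^ 2 := by
        have h8 := exp_two_lt_eight
        have h3 : (t - s) * (1 + t ^ 2) ≤ R * t := by
          rw [ha, hR]; nlinarith [mul_pos hε0 ht, mul_pos hδ0 ht]
        calc (E - 1) * (1 + t ^ 2) ≤ (t * (t - s) * E) * (1 + t ^ 2) :=
              mul_le_mul_of_nonneg_right hE1 (by positivity)
          _ ≤ (t * (t - s) * Real.exp 2) * (1 + t ^ 2) :=
              mul_le_mul_of_nonneg_right
                (mul_le_mul_of_nonneg_left hEle htapos.le) (by positivity)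
          _ = Real.exp 2 * t * ((t - s) * (1 + t ^ 2)) := by ring
          _ ≤ Real.exp 2 * t * (R * t) := by
              apply mul_le_mul_of_nonneg_left h3
              positivity
          _ = Real.exp 2 * (R * t ^ 2) := by ring
          _ ≤ 8 * (R * t ^ 2) := by
              apply mul_le_mul_of_nonneg_right h8.le
              positivity
          _ = 8 * R * t ^ 2 := by ring
      have hdiv : (E - 1) / t ≤ 8 * R * (t / (1 + t ^ 2)) := by
        rw [show 8 * R * (t / (1 + t ^ 2)) = (8 * R * t) / (1 + t ^ 2) by ring]
        rw [div_le_div_iff₀ ht (by positivity : (0:ℝ) < 1 + t ^ 2)]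
        nlinarith
      calc Phi t - Phi s ≤ gaussDensity t * ((E - 1) / t) := hnum
        _ ≤ gaussDensity t * (8 * R * (t / (1 + t ^ 2))) :=
            mul_le_mul_of_nonneg_left hdiv (gd_pos t).le
        _ = 8 * R * (gaussDensity t * (t / (1 + t ^ 2))) := by ring
        _ ≤ 8 * R * (1 - Phi t) := by
            apply mul_le_mul_of_nonneg_left (hDt ▸ hmills)
            positivity
  rw [div_le_iff₀ hGpos]
  unfold Gtail
  nlinarith [key, hDpos, hRpos]
end
end

section
/- For all t with 0 ≤ t ≤ 1, the standard normal density and tail satisfy φ(t) ≤ (√(4+t²) − t) φ(t) ≤ G(t), where G(t) = 2(1 − Φ(t)); in particular G(t) ≥ φ(t) for 0 ≤ t ≤ 1. -/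
noncomputable section

open MeasureTheory Real
open Filter

def gf (x : ℝ) : ℝ := (Real.sqrt (4 + x ^ 2) - x) * Real.exp (-(x ^ 2) / 2) / 2

def gf' (x : ℝ) : ℝ :=
  (x / Real.sqrt (4 + x ^ 2) - 1 - x * (Real.sqrt (4 + x ^ 2) - x)) * Real.exp (-(x ^ 2) / 2) / 2

lemma sqrt_pos4 (x : ℝ) : 0 < Real.sqrt (4 + x ^ 2) := Real.sqrt_pos.2 (by positivity)

lemma hasDerivAt_gf (x : ℝ) : HasDerivAt gf (gf' x) x := by
  have h4 : (0:ℝ) < 4 + x ^ 2 := by positivity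
  have hs : HasDerivAt (fun x : ℝ => Real.sqrt (4 + x ^ 2)) (x / Real.sqrt (4 + x ^ 2)) x := by
    have h := (Real.hasDerivAt_sqrt h4.ne').comp x ((hasDerivAt_pow 2 x).const_add 4)
    refine h.congr_deriv ?_
    have hs : Real.sqrt (4 + x ^ 2) > 0 := sqrt_pos4 x
    field_simp; ring
  have he : HasDerivAt (fun x : ℝ => Real.exp (-(x ^ 2) / 2)) (-x * Real.exp (-(x ^ 2) / 2)) x := by
    have h : HasDerivAt (fun x : ℝ => -(x ^ 2) / 2) (-x) x := by
      have := ((hasDerivAt_pow 2 x).neg).div_const 2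
      refine this.congr_deriv ?_; push_cast; ring
    simpa [mul_comm] using h.exp
  have h := ((hs.sub (hasDerivAt_id x)).mul he).div_const 2
  refine h.congr_deriv ?_
  unfold gf'; simp only [Pi.sub_apply, id_eq]; ring

lemma key_ineq (x : ℝ) : -Real.exp (-(x ^ 2) / 2) ≤ gf' x := by
  unfold gf'
  set s := Real.sqrt (4 + x ^ 2) with hsdef
  have hs0 : 0 < s := sqrt_pos4 x
  have hs2 : s ^ 2 = 4 + x ^ 2 := Real.sq_sqrt (by positivity)
  have hg : 0 < Real.exp (-(x ^ 2) / 2) := Real.exp_pos _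
  have hkey : 3 * x + x ^ 3 ≤ s * (1 + x ^ 2) := by
    rcases le_or_gt (3 * x + x ^ 3) 0 with h | h
    · nlinarith [mul_pos hs0 (show (0:ℝ) < 1 + x ^ 2 by positivity)]
    · by_contra hcon
      push_neg at hcon
      have hu : 0 ≤ s * (1 + x ^ 2) := by positivity
      nlinarith [mul_self_lt_mul_self hu hcon]
  have hxs : x * s ^ 2 = x * (4 + x ^ 2) := by rw [hs2]
  have hA : -2 ≤ x / s - 1 - x * (s - x) := by
    rw [div_sub' hs0.ne', div_sub' hs0.ne', le_div_iff₀ hs0]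
    nlinarith [hxs, hkey]
  nlinarith [mul_le_mul_of_nonneg_right hA hg.le]

lemma cont_gf' : Continuous gf' := by
  have hsqrt : Continuous fun x : ℝ => Real.sqrt (4 + x ^ 2) :=
    Real.continuous_sqrt.comp (by continuity)
  have hsne : ∀ x : ℝ, Real.sqrt (4 + x ^ 2) ≠ 0 := fun x => (sqrt_pos4 x).ne'
  unfold gf'
  exact ((((continuous_id.div hsqrt hsne).sub continuous_const).sub
    (continuous_id.mul (hsqrt.sub continuous_id))).mul (by continuity)).div_const 2

lemma exp_integrable : Integrable (fun x : ℝ => Real.exp (-(x ^ 2) / 2)) := by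
  have h := integrable_exp_neg_mul_sq (show (0:ℝ) < 1/2 by norm_num)
  convert h using 2 with x
  ring_nf

lemma gf_tendsto_zero : Tendsto gf atTop (nhds 0) := by
  have h1 : Tendsto (fun b : ℝ => b ^ 2 / 2) atTop atTop :=
    (tendsto_pow_atTop two_ne_zero).atTop_div_const (by norm_num)
  have h2 : Tendsto (fun b : ℝ => Real.exp (-(b ^ 2) / 2)) atTop (nhds 0) := by
    have := tendsto_exp_neg_atTop_nhds_zero.comp h1
    simpa [Function.comp_def, neg_div] using this
  apply squeeze_zero' ?_ ?_ h2
  · filter_upwards [eventually_ge_atTop (0:ℝ)] with b hb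
    have : b ≤ Real.sqrt (4 + b ^ 2) := by
      nlinarith [Real.sq_sqrt (show (0:ℝ) ≤ 4 + b ^ 2 by positivity),
        Real.sqrt_nonneg (4 + b ^ 2)]
    unfold gf
    exact div_nonneg (mul_nonneg (sub_nonneg.2 this) (Real.exp_pos _).le) (by norm_num)
  · filter_upwards [eventually_ge_atTop (0:ℝ)] with b hb
    have : Real.sqrt (4 + b ^ 2) ≤ 2 + b := by
      nlinarith [Real.sq_sqrt (show (0:ℝ) ≤ 4 + b ^ 2 by positivity),
        Real.sqrt_nonneg (4 + b ^ 2)]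
    unfold gf
    rw [div_le_iff₀ (by norm_num : (0:ℝ) < 2)]
    have hg : 0 < Real.exp (-(b ^ 2) / 2) := Real.exp_pos _
    nlinarith

lemma tail_ge_gf (t : ℝ) : gf t ≤ ∫ x in Set.Ioi t, Real.exp (-(x ^ 2) / 2) := by
  have hInt := exp_integrable
  have hI : ∀ b : ℝ, t ≤ b → gf t - gf b ≤ ∫ x in Set.Ioi t, Real.exp (-(x ^ 2) / 2) := by
    intro b hb
    have hftc : ∫ x in t..b, gf' x = gf b - gf t :=
      intervalIntegral.integral_eq_sub_of_hasDerivAt (fun x _ => hasDerivAt_gf x)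
        (cont_gf'.intervalIntegrable t b)
    have hmono : ∫ x in t..b, -Real.exp (-(x ^ 2) / 2) ≤ ∫ x in t..b, gf' x :=
      intervalIntegral.integral_mono_on hb
        (hInt.intervalIntegrable (a := t) (b := b)).neg (cont_gf'.intervalIntegrable t b)
        (fun x _ => key_ineq x)
    rw [hftc, intervalIntegral.integral_neg] at hmono
    have h1 : gf t - gf b ≤ ∫ x in t..b, Real.exp (-(x ^ 2) / 2) := by linarith
    have h2 : ∫ x in t..b, Real.exp (-(x ^ 2) / 2)
        ≤ ∫ x in Set.Ioi t, Real.exp (-(x ^ 2) / 2) := by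
      rw [intervalIntegral.integral_of_le hb]
      apply setIntegral_mono_set hInt.integrableOn
      · filter_upwards with x using (Real.exp_pos _).le
      · exact HasSubset.Subset.eventuallyLE Set.Ioc_subset_Ioi_self
    linarith
  have htend : Tendsto (fun b => gf t - gf b) atTop (nhds (gf t)) := by
    simpa using (tendsto_const_nhds (x := gf t)).sub gf_tendsto_zero
  exact le_of_tendsto htend (by filter_upwards [eventually_ge_atTop t] with b hb using hI b hb)

lemma exp_total : ∫ x : ℝ, Real.exp (-(x ^ 2) / 2) = Real.sqrt (2 * Real.pi) := by
  have h := integral_gaussian (1/2 : ℝ)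
  rw [show Real.pi / (1/2) = 2 * Real.pi by ring] at h
  rw [← h]
  congr 1 with x
  ring_nf

/-- STATEMENT 11: for `0 ≤ t ≤ 1`,
`φ(t) ≤ (√(4+t²) − t)·φ(t) ≤ G(t)`; in particular `φ(t) ≤ G(t)`. -/
theorem gaussDensity_le_Gtail (t : ℝ) (ht0 : 0 ≤ t) (ht1 : t ≤ 1) :
    gaussDensity t ≤ (Real.sqrt (4 + t ^ 2) - t) * gaussDensity t ∧
      (Real.sqrt (4 + t ^ 2) - t) * gaussDensity t ≤ Gtail t ∧
      gaussDensity t ≤ Gtail t := by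
  have hc : 0 < Real.sqrt (2 * Real.pi) := Real.sqrt_pos.2 (by positivity)
  have hgd : 0 ≤ gaussDensity t := by
    unfold gaussDensity; positivity
  have h1 : (1:ℝ) ≤ Real.sqrt (4 + t ^ 2) - t := by
    have : 1 + t ≤ Real.sqrt (4 + t ^ 2) := by
      nlinarith [Real.sq_sqrt (show (0:ℝ) ≤ 4 + t ^ 2 by positivity),
        Real.sqrt_nonneg (4 + t ^ 2)]
    linarith
  have hfirst : gaussDensity t ≤ (Real.sqrt (4 + t ^ 2) - t) * gaussDensity t :=
    le_mul_of_one_le_left hgd h1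
  have hInt := exp_integrable
  have hPhi : Phi t = (∫ x in Set.Iic t, Real.exp (-(x ^ 2) / 2)) / Real.sqrt (2 * Real.pi) := by
    unfold Phi gaussDensity
    rw [integral_div]
  have hsplit : (∫ x in Set.Iic t, Real.exp (-(x ^ 2) / 2))
      + (∫ x in Set.Ioi t, Real.exp (-(x ^ 2) / 2)) = Real.sqrt (2 * Real.pi) := by
    rw [intervalIntegral.integral_Iic_add_Ioi hInt.integrableOn hInt.integrableOn]
    exact exp_total
  have hG : Gtail t = 2 * (∫ x in Set.Ioi t, Real.exp (-(x ^ 2) / 2)) / Real.sqrt (2 * Real.pi) := by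
    unfold Gtail
    have hA : (1:ℝ) - (∫ x in Set.Iic t, Real.exp (-(x ^ 2) / 2)) / Real.sqrt (2 * Real.pi)
        = (∫ x in Set.Ioi t, Real.exp (-(x ^ 2) / 2)) / Real.sqrt (2 * Real.pi) := by
      rw [eq_div_iff hc.ne', sub_mul, one_mul, div_mul_cancel₀ _ hc.ne']
      linarith
    rw [hPhi, hA, mul_div_assoc]
  have hsecond : (Real.sqrt (4 + t ^ 2) - t) * gaussDensity t ≤ Gtail t := by
    rw [hG]
    have htail := tail_ge_gf t
    unfold gaussDensity
    rw [show (Real.sqrt (4 + t ^ 2) - t) * (Real.exp (-(t ^ 2) / 2) / Real.sqrt (2 * Real.pi))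
      = ((Real.sqrt (4 + t ^ 2) - t) * Real.exp (-(t ^ 2) / 2)) / Real.sqrt (2 * Real.pi) by ring]
    rw [div_le_div_iff_of_pos_right hc]
    have hgf : gf t = (Real.sqrt (4 + t ^ 2) - t) * Real.exp (-(t ^ 2) / 2) / 2 := rfl
    linarith
  exact ⟨hfirst, hsecond, le_trans hfirst hsecond⟩

end
end
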